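/- For ε > 0, ∫_{t-ε}^{t} ∫_{-∞}^{∞} (t-τ)(1 - e^{-λ} - λ e^{-λ})/(λ²(t-τ)²) ds dτ = (8/3)√(πε), where λ = s²/(4(t-τ)). -/

import Mathlib

open Real MeasureTheory intervalIntegral

open Set Filter Topology

noncomputable def hfun (z : ℝ) : ℝ :=
  (1 - Real.exp (-z ^ 2) - z ^ 2 * Real.exp (-z ^ 2)) / z ^ 4

lemma gbounds {u : ℝ} (hu : 0 ≤ u) :
    0 ≤ 1 - Real.exp (-u) - u * Real.exp (-u) ∧
      1 - Real.exp (-u) - u * Real.exp (-u) ≤ u ^ 2 := by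
  have e1 := Real.add_one_le_exp u
  have e2 := Real.add_one_le_exp (-u)
  have e3 : Real.exp u * Real.exp (-u) = 1 := by
    rw [← Real.exp_add]; simp
  have e5 := Real.exp_pos (-u)
  constructor
  · nlinarith [mul_le_mul_of_nonneg_right e1 e5.le]
  · nlinarith

lemma hfun_nonneg (z : ℝ) : 0 ≤ hfun z :=
  div_nonneg (by simpa using (gbounds (sq_nonneg z)).1) (by positivity)

lemma hfun_le_one (z : ℝ) : hfun z ≤ 1 := by
  rcases eq_or_ne z 0 with rfl | hz
  · simp [hfun]
  · have h4 : (0:ℝ) < z ^ 4 := by positivity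
    rw [hfun, div_le_one h4]
    have := (gbounds (sq_nonneg z)).2
    calc 1 - Real.exp (-z ^ 2) - z ^ 2 * Real.exp (-z ^ 2) ≤ (z ^ 2) ^ 2 := this
    _ = z ^ 4 := by ring

lemma gle_one (z : ℝ) : 1 - Real.exp (-z ^ 2) - z ^ 2 * Real.exp (-z ^ 2) ≤ 1 := by
  nlinarith [Real.exp_pos (-z ^ 2), sq_nonneg z, mul_nonneg (sq_nonneg z) (Real.exp_pos (-z^2)).le]

lemma hfun_meas : Measurable hfun := by
  apply Measurable.div <;> fun_prop

lemma hfun_integrableOn : IntegrableOn hfun (Ioi (0:ℝ)) := by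
  rw [← Ioc_union_Ioi_eq_Ioi (zero_le_one : (0:ℝ) ≤ 1)]
  refine IntegrableOn.union ?_ ?_
  · refine Measure.integrableOn_of_bounded (M := 1) (by simp) hfun_meas.aestronglyMeasurable ?_
    exact ae_of_all _ fun z => by
      rw [Real.norm_eq_abs, abs_of_nonneg (hfun_nonneg z)]; exact hfun_le_one z
  · refine (integrableOn_Ioi_rpow_of_lt (by norm_num : (-4:ℝ) < -1) one_pos).mono'
      hfun_meas.aestronglyMeasurable ?_
    filter_upwards [ae_restrict_mem measurableSet_Ioi] with z hz
    have hz1 : (1:ℝ) < z := hz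
    have hz0 : (0:ℝ) < z := by linarith
    rw [Real.norm_eq_abs, abs_of_nonneg (hfun_nonneg z)]
    have h4 : z ^ ((-4:ℝ)) = (z ^ 4)⁻¹ := by
      rw [Real.rpow_neg hz0.le, show ((4:ℝ) = ((4:ℕ):ℝ)) by norm_num, Real.rpow_natCast]
    rw [h4, hfun, div_eq_mul_inv]
    have h4p : (0:ℝ) < z ^ 4 := by positivity
    exact mul_le_of_le_one_left (by positivity) (gle_one z)

lemma integral_hfun_Ioi : ∫ z in Ioi (0:ℝ), hfun z = Real.sqrt π / 3 := by
  set F : ℝ → ℝ := fun z =>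
    -(1 - Real.exp (-z ^ 2) - z ^ 2 * Real.exp (-z ^ 2)) / (3 * z ^ 3) with hF
  have hF0 : F 0 = 0 := by simp [hF]
  have hFle : ∀ z : ℝ, 0 < z → F z ≤ 0 := fun z hz =>
    div_nonpos_of_nonpos_of_nonneg (by simpa using (gbounds (sq_nonneg z)).1) (by positivity)
  have hderiv : ∀ z ∈ Ioi (0:ℝ), HasDerivAt F (hfun z - 2 / 3 * Real.exp (-z ^ 2)) z := by
    intro z hz
    have hz0 : (0:ℝ) < z := hz
    have h1 : HasDerivAt (fun z : ℝ => -z ^ 2) (-(2 * z)) z := by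
      simpa [Pi.neg_def] using (hasDerivAt_pow 2 z).neg
    have h2 : HasDerivAt (fun z : ℝ => Real.exp (-z ^ 2))
        (Real.exp (-z ^ 2) * -(2 * z)) z := h1.exp
    have h3 : HasDerivAt (fun z : ℝ => z ^ 2 * Real.exp (-z ^ 2))
        ((2 * z ^ 1) * Real.exp (-z ^ 2) + z ^ 2 * (Real.exp (-z ^ 2) * -(2 * z))) z :=
      (hasDerivAt_pow 2 z).mul h2
    have hg : HasDerivAt (fun z : ℝ => -(1 - Real.exp (-z ^ 2) - z ^ 2 * Real.exp (-z ^ 2)))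
        (-(0 - Real.exp (-z ^ 2) * -(2 * z) -
          ((2 * z ^ 1) * Real.exp (-z ^ 2) + z ^ 2 * (Real.exp (-z ^ 2) * -(2 * z))))) z :=
      (((hasDerivAt_const z (1:ℝ)).sub h2).sub h3).neg
    have hd : HasDerivAt (fun z : ℝ => 3 * z ^ 3) (3 * (3 * z ^ 2)) z := by
      simpa using ((hasDerivAt_pow 3 z).const_mul (3:ℝ))
    have hne : 3 * z ^ 3 ≠ 0 := by positivity
    have := hg.div hd hne
    convert this using 1
    case e'_4 => rfl
    case e'_5 => rfl
    case e'_8 => rfl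
    rw [hfun]
    field_simp
    ring
  have hcont : ContinuousWithinAt F (Ici 0) 0 := by
    rw [ContinuousWithinAt, hF0]
    apply tendsto_of_tendsto_of_tendsto_of_le_of_le'
      (g := fun z : ℝ => -(z / 3)) (h := fun _ : ℝ => (0:ℝ))
    · have : Tendsto (fun z : ℝ => -(z / 3)) (nhds 0) (nhds (-(0/3))) :=
        ((continuous_id.div_const 3).neg).tendsto 0
      simpa using this.mono_left nhdsWithin_le_nhds
    · exact tendsto_const_nhds
    · filter_upwards [self_mem_nhdsWithin] with z (hz : z ∈ Ici (0:ℝ))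
      rcases eq_or_lt_of_le (show (0:ℝ) ≤ z from hz) with rfl | hz0
      · simp [hF0]
      · simp only [hF]
        rw [neg_div, neg_le_neg_iff, div_le_div_iff₀ (by positivity) (by norm_num)]
        have h2 := (gbounds (sq_nonneg z)).2
        nlinarith
    · filter_upwards [self_mem_nhdsWithin] with z (hz : z ∈ Ici (0:ℝ))
      rcases eq_or_lt_of_le (show (0:ℝ) ≤ z from hz) with rfl | hz0
      · simp [hF0]
      · exact hFle z hz0
  have htop : Tendsto F atTop (nhds 0) := by
    apply tendsto_of_tendsto_of_tendsto_of_le_of_le'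
      (g := fun z : ℝ => -(1 / (3 * z ^ 3))) (h := fun _ : ℝ => (0:ℝ))
    · have hden : Tendsto (fun z : ℝ => 3 * z ^ 3) atTop atTop :=
        (tendsto_pow_atTop (by norm_num : 3 ≠ 0)).const_mul_atTop (by norm_num)
      have := (tendsto_const_nhds (x := (1:ℝ))).div_atTop hden
      simpa using this.neg
    · exact tendsto_const_nhds
    · filter_upwards [eventually_ge_atTop (1:ℝ)] with z hz
      have hz0 : (0:ℝ) < z := by linarith
      simp only [hF]
      rw [neg_div, neg_le_neg_iff, div_le_div_iff₀ (by positivity) (by positivity)]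
      exact mul_le_mul_of_nonneg_right (gle_one z) (by positivity)
    · filter_upwards [eventually_ge_atTop (1:ℝ)] with z hz
      exact hFle z (by linarith)
  have hexp_int : IntegrableOn (fun z : ℝ => Real.exp (-z ^ 2)) (Ioi 0) := by
    have := (integrable_exp_neg_mul_sq (one_pos)).integrableOn (s := Ioi (0:ℝ))
    simpa using this
  have hint : IntegrableOn (fun z => hfun z - 2 / 3 * Real.exp (-z ^ 2)) (Ioi (0:ℝ)) :=
    hfun_integrableOn.sub (hexp_int.const_mul _)
  have h0 := integral_Ioi_of_hasDerivAt_of_tendsto hcont hderiv hint htop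
  rw [hF0, sub_zero] at h0
  have hsplit : ∫ z in Ioi (0:ℝ), (hfun z - 2 / 3 * Real.exp (-z ^ 2))
      = (∫ z in Ioi (0:ℝ), hfun z) - ∫ z in Ioi (0:ℝ), 2 / 3 * Real.exp (-z ^ 2) :=
    integral_sub hfun_integrableOn (hexp_int.const_mul _)
  have hgauss : ∫ z in Ioi (0:ℝ), Real.exp (-z ^ 2) = Real.sqrt π / 2 := by
    have := integral_gaussian_Ioi 1
    simpa using this
  rw [hsplit, MeasureTheory.integral_const_mul, hgauss] at h0
  linarith

lemma integral_hfun : ∫ z : ℝ, hfun z = 2 / 3 * Real.sqrt π := by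
  have heq : ∀ z : ℝ, hfun z = hfun |z| := by
    intro z
    have h2 : |z| ^ 2 = z ^ 2 := sq_abs z
    have h4 : |z| ^ 4 = z ^ 4 := by
      rw [pow_abs, abs_of_nonneg (by positivity : (0:ℝ) ≤ z ^ 4)]
    rw [hfun, hfun, h2, h4]
  calc ∫ z : ℝ, hfun z = ∫ z : ℝ, hfun |z| := by simp_rw [← heq]
    _ = 2 * ∫ z in Ioi (0:ℝ), hfun z := integral_comp_abs
    _ = 2 / 3 * Real.sqrt π := by rw [integral_hfun_Ioi]; ring

lemma inner_integral {a : ℝ} (ha : 0 < a) :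
    ∫ s : ℝ, a * (1 - Real.exp (-(s ^ 2 / (4 * a)))
        - (s ^ 2 / (4 * a)) * Real.exp (-(s ^ 2 / (4 * a))))
        / ((s ^ 2 / (4 * a)) ^ 2 * a ^ 2)
      = 4 / 3 * Real.sqrt π * (Real.sqrt a)⁻¹ := by
  have hsa : 0 < Real.sqrt a := Real.sqrt_pos.mpr ha
  have hsq : Real.sqrt a ^ 2 = a := Real.sq_sqrt ha.le
  set c : ℝ := (2 * Real.sqrt a)⁻¹ with hc
  have hc0 : 0 < c := by positivity
  have hlam : ∀ s : ℝ, s ^ 2 / (4 * a) = (c * s) ^ 2 := by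
    intro s
    rw [hc, mul_pow, inv_pow, mul_pow, hsq]
    field_simp
    norm_num
  have key : ∀ s : ℝ, a * (1 - Real.exp (-(s ^ 2 / (4 * a)))
      - (s ^ 2 / (4 * a)) * Real.exp (-(s ^ 2 / (4 * a))))
      / ((s ^ 2 / (4 * a)) ^ 2 * a ^ 2) = a⁻¹ * hfun (c * s) := by
    intro s
    rw [hlam s, hfun]
    by_cases hz : c * s = 0
    · rw [hz]; simp
    · field_simp
  simp_rw [key]
  rw [MeasureTheory.integral_const_mul, Measure.integral_comp_mul_left hfun c, smul_eq_mul, integral_hfun,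
    hc, inv_inv, abs_of_pos (by positivity : (0:ℝ) < 2 * Real.sqrt a)]
  field_simp
  nlinarith [hsq, Real.sqrt_nonneg π]

theorem double_integral_kernel (t ε : ℝ) (hε : 0 < ε) :
    ∫ τ in (t - ε)..t, ∫ s : ℝ,
        (t - τ) * (1 - Real.exp (-(s ^ 2 / (4 * (t - τ))))
          - (s ^ 2 / (4 * (t - τ))) * Real.exp (-(s ^ 2 / (4 * (t - τ)))))
          / ((s ^ 2 / (4 * (t - τ))) ^ 2 * (t - τ) ^ 2)
      = (8 / 3) * Real.sqrt (π * ε) := by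
  have hcong : Set.EqOn
      (fun τ => ∫ s : ℝ,
        (t - τ) * (1 - Real.exp (-(s ^ 2 / (4 * (t - τ))))
          - (s ^ 2 / (4 * (t - τ))) * Real.exp (-(s ^ 2 / (4 * (t - τ)))))
          / ((s ^ 2 / (4 * (t - τ))) ^ 2 * (t - τ) ^ 2))
      (fun τ => 4 / 3 * Real.sqrt π * (Real.sqrt (t - τ))⁻¹)
      (Set.uIcc (t - ε) t) := by
    intro τ hτ
    rw [Set.uIcc_of_le (by linarith)] at hτ
    rcases lt_or_eq_of_le hτ.2 with h | h
    · exact inner_integral (by linarith : (0:ℝ) < t - τ)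
    · simp [h]
  rw [intervalIntegral.integral_congr hcong, intervalIntegral.integral_const_mul,
    intervalIntegral.integral_comp_sub_left (fun u => (Real.sqrt u)⁻¹) t,
    sub_self, show t - (t - ε) = ε by ring]
  have hrw : ∫ u in (0:ℝ)..ε, (Real.sqrt u)⁻¹ = ∫ u in (0:ℝ)..ε, u ^ (-(1/2) : ℝ) := by
    apply intervalIntegral.integral_congr
    intro u hu
    rw [Set.uIcc_of_le hε.le] at hu
    show (Real.sqrt u)⁻¹ = u ^ (-(1/2) : ℝ)
    rw [Real.rpow_neg hu.1, Real.sqrt_eq_rpow]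
  rw [hrw, integral_rpow (Or.inl (by norm_num))]
  rw [Real.zero_rpow (by norm_num), Real.sqrt_mul pi_pos.le, Real.sqrt_eq_rpow ε]
  norm_num
  ring
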